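/- Let (Pᵢ)_{i ∈ I} be a nonempty family of probability measures on a measurable space (Ω, F), and Ψ : Ω × ℝ^d → ℝ ∪ {-∞} with Ψ(ω, ·) concave for each ω, Ψ ≤ C uniformly, Ψ jointly measurable, and suppose there is h° ∈ ℝ^d with inf_i E^{Pᵢ}[Ψ(h°)] > -∞. Define Φ(h) := inf_{i ∈ I} E^{Pᵢ}[Ψ(h)]. Then Φ^∞(h) = inf_{i ∈ I} E^{Pᵢ}[Ψ^∞(h)] for every h ∈ ℝ^d. -/

import Mathlib

open MeasureTheory Filter
open scoped ENNReal

/-- Concavity for extended-real-valued functions (values in `ℝ ∪ {-∞} ⊆ EReal`). -/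
def IsConcaveE {E : Type*} [AddCommGroup E] [Module ℝ E] (f : E → EReal) : Prop :=
  ∀ x y : E, ∀ a b : ℝ, 0 ≤ a → 0 ≤ b → a + b = 1 →
    (a : EReal) * f x + (b : EReal) * f y ≤ f (a • x + b • y)

/-- Horizon (recession) function of `f` with base point `x`:
`f^∞(h) = inf_{n ∈ ℕ+} (1/n) (f (x + n h) - f x)`. -/
noncomputable def hor {E : Type*} [AddCommGroup E] [Module ℝ E]
    (f : E → EReal) (x h : E) : EReal :=
  ⨅ n : ℕ+, ((n : ℝ)⁻¹ : EReal) * (f (x + (n : ℝ) • h) - f x)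

/-- The canonical map `EReal → ℝ≥0∞` (sending `⊤` to `⊤` and negatives to `0`). -/
noncomputable def erealToENNReal (x : EReal) : ℝ≥0∞ :=
  if x = ⊤ then ⊤ else ENNReal.ofReal x.toReal

/-- Expectation of a function `g : Ω → ℝ ∪ {-∞}` bounded above by the constant `C`,
with values in `ℝ ∪ {-∞} ⊆ EReal`: `E[g] = C - ∫⁻ (C - g)`. -/
noncomputable def expE {Ω : Type*} [MeasurableSpace Ω] (P : Measure Ω) (C : ℝ)
    (g : Ω → EReal) : EReal :=
  (C : EReal) - ENNReal.toEReal (∫⁻ ω, erealToENNReal ((C : EReal) - g ω) ∂P)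

open scoped NNReal

section eEaux

lemma eE_top : erealToENNReal ⊤ = ⊤ := if_pos rfl

lemma eE_coe (r : ℝ) : erealToENNReal (r : EReal) = ENNReal.ofReal r := by
  rw [erealToENNReal, if_neg (EReal.coe_ne_top r), EReal.toReal_coe]

lemma eE_bot : erealToENNReal ⊥ = 0 := by
  rw [erealToENNReal, if_neg (by simp), EReal.toReal_bot]; simp

lemma eE_zero : erealToENNReal 0 = 0 := by
  rw [show (0 : EReal) = ((0:ℝ) : EReal) by norm_cast, eE_coe]; simp

lemma ereal_coe_ennreal_toReal {Y : ℝ≥0∞} (hY : Y ≠ ⊤) :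
    ((Y.toReal : ℝ) : EReal) = (Y : EReal) := by
  lift Y to ℝ≥0 using hY
  rw [EReal.coe_nnreal_eq_coe_real]
  norm_cast

lemma gc_eE : GaloisConnection erealToENNReal (fun Y : ℝ≥0∞ => (Y : EReal)) := by
  intro x Y
  induction x using EReal.rec with
  | bot => simp [eE_bot]
  | top => simp [eE_top, top_le_iff, EReal.coe_ennreal_eq_top_iff]
  | coe r =>
    rw [eE_coe]
    show ENNReal.ofReal r ≤ Y ↔ (r : EReal) ≤ (Y : EReal)
    rcases eq_or_ne Y ⊤ with rfl | hY
    · simp [le_top, EReal.coe_ennreal_top]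
    · rw [ENNReal.ofReal_le_iff_le_toReal hY, ← ereal_coe_ennreal_toReal hY]
      exact EReal.coe_le_coe_iff.symm

lemma eE_mono {x y : EReal} (h : x ≤ y) : erealToENNReal x ≤ erealToENNReal y :=
  gc_eE.monotone_l h

lemma eE_iSup {ι : Sort*} (f : ι → EReal) :
    erealToENNReal (⨆ i, f i) = ⨆ i, erealToENNReal (f i) := gc_eE.l_iSup

lemma eE_eq_top_iff {x : EReal} : erealToENNReal x = ⊤ ↔ x = ⊤ := by
  induction x using EReal.rec with
  | bot => simp [eE_bot]
  | top => simp [eE_top]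
  | coe r => simp [eE_coe, ENNReal.ofReal_ne_top]

lemma eE_nonpos {x : EReal} (h : x ≤ 0) : erealToENNReal x = 0 := by
  have := eE_mono h
  rwa [eE_zero, le_zero_iff] at this

lemma eE_coe_ennreal (X : ℝ≥0∞) : erealToENNReal (X : EReal) = X := by
  rcases eq_or_ne X ⊤ with rfl | hX
  · simp [EReal.coe_ennreal_top, eE_top]
  · lift X to ℝ≥0 using hX
    rw [EReal.coe_nnreal_eq_coe_real, eE_coe, ENNReal.ofReal_coe_nnreal]

lemma eE_mul {c : ℝ} (hc : 0 < c) (x : EReal) :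
    erealToENNReal ((c : EReal) * x) = ENNReal.ofReal c * erealToENNReal x := by
  induction x using EReal.rec with
  | bot =>
    rw [EReal.coe_mul_bot_of_pos hc]
    simp [eE_bot]
  | top =>
    rw [EReal.coe_mul_top_of_pos hc]
    rw [eE_top, ENNReal.mul_top (ENNReal.ofReal_pos.2 hc).ne']
  | coe r =>
    rw [← EReal.coe_mul, eE_coe, eE_coe, ENNReal.ofReal_mul hc.le]

lemma eE_add {x y : EReal} (hx : 0 ≤ x) (hy : 0 ≤ y) :
    erealToENNReal (x + y) = erealToENNReal x + erealToENNReal y := by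
  induction x using EReal.rec with
  | bot => exact absurd hx (by simp)
  | top =>
    rw [EReal.top_add_of_ne_bot (by rintro rfl; simp at hy), eE_top]
    simp
  | coe r =>
    induction y using EReal.rec with
    | bot => exact absurd hy (by simp)
    | top =>
      rw [EReal.coe_add_top, eE_top, eE_coe]
      simp
    | coe s =>
      rw [← EReal.coe_add, eE_coe, eE_coe, eE_coe,
        ENNReal.ofReal_add (by exact_mod_cast hx) (by exact_mod_cast hy)]

lemma ereal_zero_sub (x : EReal) : (0 : EReal) - x = -x := by
  rw [sub_eq_add_neg, zero_add]

lemma ereal_sub_zero (x : EReal) : x - 0 = x := by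
  rw [sub_eq_add_neg, neg_zero, add_zero]

lemma ereal_neg_iInf {ι : Sort*} (f : ι → EReal) : -(⨅ i, f i) = ⨆ i, -(f i) := by
  apply le_antisymm
  · rw [EReal.neg_le]
    refine le_iInf fun i => ?_
    rw [← EReal.neg_le_neg_iff, neg_neg]
    exact le_iSup (fun i => -f i) i
  · exact iSup_le fun i => EReal.neg_le_neg_iff.2 (iInf_le _ i)

lemma aux_eps {x : EReal} {y : ℝ} (h : ∀ ε : ℝ, 0 < ε → x ≤ ((y + ε : ℝ) : EReal)) :
    x ≤ (y : EReal) := by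
  by_contra h'
  push_neg at h'
  obtain ⟨w, hw1, hw2⟩ := EReal.exists_between_coe_real h'
  have hε : 0 < w - y := by exact_mod_cast sub_pos.2 (EReal.coe_lt_coe_iff.1 hw1)
  have := h (w - y) hε
  rw [show y + (w - y) = w by ring] at this
  exact absurd (lt_of_le_of_lt this hw2) (lt_irrefl _)

end eEaux

section orderAux

variable {ι : Sort*}

lemma iInf_sub_const (f : ι → EReal) (c : ℝ) :
    (⨅ i, f i) - (c : EReal) = ⨅ i, (f i - (c : EReal)) := by
  apply le_antisymm
  · exact le_iInf fun i => EReal.sub_le_sub (iInf_le f i) le_rfl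
  · rw [EReal.le_sub_iff_add_le (Or.inl (EReal.coe_ne_bot c)) (Or.inl (EReal.coe_ne_top c))]
    refine le_iInf fun i => ?_
    calc (⨅ j, (f j - (c:EReal))) + (c:EReal) ≤ (f i - c) + c :=
          add_le_add (iInf_le _ i) le_rfl
    _ = f i := EReal.sub_add_cancel

lemma coe_mul_coe_mul (s t : ℝ) (x : EReal) :
    (s : EReal) * ((t : EReal) * x) = ((s * t : ℝ) : EReal) * x := by
  rw [← mul_assoc, ← EReal.coe_mul]

lemma const_mul_iInf {r : ℝ} (hr : 0 < r) (f : ι → EReal) :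
    (r : EReal) * ⨅ i, f i = ⨅ i, (r : EReal) * f i := by
  have hrn : (0 : EReal) ≤ (r : EReal) := by exact_mod_cast hr.le
  have hrn' : (0 : EReal) ≤ ((r⁻¹ : ℝ) : EReal) := by
    exact_mod_cast (inv_nonneg.2 hr.le)
  apply le_antisymm
  · exact le_iInf fun i => mul_le_mul_of_nonneg_left (iInf_le f i) hrn
  · have h3 : ((r⁻¹ : ℝ) : EReal) * ⨅ i, (r : EReal) * f i ≤ ⨅ i, f i := by
      refine le_iInf fun i => ?_
      calc ((r⁻¹:ℝ):EReal) * ⨅ j, (r:EReal) * f j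
          ≤ ((r⁻¹:ℝ):EReal) * ((r:EReal) * f i) :=
            mul_le_mul_of_nonneg_left (iInf_le _ i) hrn'
      _ = f i := by rw [coe_mul_coe_mul, inv_mul_cancel₀ hr.ne', EReal.coe_one, one_mul]
    calc ⨅ i, (r:EReal) * f i
        = (r:EReal) * (((r⁻¹:ℝ):EReal) * ⨅ i, (r:EReal) * f i) := by
          rw [coe_mul_coe_mul, mul_inv_cancel₀ hr.ne', EReal.coe_one, one_mul]
    _ ≤ (r:EReal) * ⨅ i, f i := mul_le_mul_of_nonneg_left h3 hrn

lemma iInf_min_const (f : ι → EReal) (c : EReal) [Nonempty ι] :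
    ⨅ i, min (f i) c = min (⨅ i, f i) c := by
  apply le_antisymm
  · refine le_min ?_ ?_
    · exact le_iInf fun i => le_trans (iInf_le _ i) (min_le_left _ _)
    · exact le_trans (iInf_le _ (Classical.arbitrary ι)) (min_le_right _ _)
  · exact le_iInf fun i => min_le_min (iInf_le f i) le_rfl

end orderAux

section measAux

lemma measurable_eE : Measurable erealToENNReal := by
  have : erealToENNReal = fun x : EReal =>
      if x = ⊤ then (⊤ : ℝ≥0∞) else ENNReal.ofReal x.toReal := rfl
  rw [this]
  refine Measurable.ite ?_ measurable_const
    (ENNReal.measurable_ofReal.comp measurable_ereal_toReal)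
  rw [show {a : EReal | a = ⊤} = {⊤} from by ext x; simp]
  exact measurableSet_singleton _

lemma measurable_ereal_sub : Measurable fun p : EReal × EReal => p.1 - p.2 := by
  have htt : (⊤ : EReal) - ⊤ = ⊥ := by
    rw [sub_eq_add_neg, EReal.neg_top, EReal.add_bot]
  have : (fun p : EReal × EReal => p.1 - p.2) = fun p =>
      if p.1 = ⊥ then ⊥ else if p.2 = ⊤ then ⊥ else if p.1 = ⊤ then ⊤ else if p.2 = ⊥ then ⊤
      else ((p.1.toReal - p.2.toReal : ℝ) : EReal) := by
    funext p
    obtain ⟨x, y⟩ := p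
    induction x using EReal.rec with
    | bot => simp [EReal.bot_sub]
    | top =>
      induction y using EReal.rec with
      | bot => simp [EReal.top_sub_bot]
      | top => simp [htt]
      | coe s => simp [EReal.top_sub_coe]
    | coe r =>
      induction y using EReal.rec with
      | bot => simp [EReal.coe_sub_bot]
      | top => simp [EReal.sub_top]
      | coe s => simp [← EReal.coe_sub]
  rw [this]
  refine Measurable.ite ?_ measurable_const (Measurable.ite ?_ measurable_const
    (Measurable.ite ?_ measurable_const (Measurable.ite ?_ measurable_const
      ((measurable_fst.ereal_toReal.sub measurable_snd.ereal_toReal).coe_real_ereal))))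
  · exact measurable_fst (measurableSet_singleton _)
  · exact measurable_snd (measurableSet_singleton _)
  · exact measurable_fst (measurableSet_singleton _)
  · exact measurable_snd (measurableSet_singleton _)

lemma measurable_const_mul_ereal (c : ℝ) : Measurable fun x : EReal => (c : EReal) * x := by
  refine EReal.measurable_of_measurable_real ?_
  have : (fun p : ℝ => (c : EReal) * (p : EReal)) = fun p : ℝ => ((c * p : ℝ) : EReal) := by
    funext p; rw [EReal.coe_mul]
  rw [this]
  exact measurable_coe_real_ereal.comp (measurable_id.const_mul c)

lemma measurable_ereal_neg : Measurable fun x : EReal => -x :=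
  continuous_neg.measurable

end measAux

section aux4sec

lemma ereal_neg_coe_ennreal_le_zero (X : ℝ≥0∞) : -((X : ℝ≥0∞) : EReal) ≤ 0 := by
  rw [← neg_zero]
  exact EReal.neg_le_neg_iff.2 (EReal.coe_ennreal_nonneg X)

lemma aux4 (I : ℕ → ℝ≥0∞) :
    -(((⨆ n, I n) : ℝ≥0∞) : EReal) = ⨅ n, -((I n : ℝ≥0∞) : EReal) := by
  apply le_antisymm
  · exact le_iInf fun n =>
      EReal.neg_le_neg_iff.2 (EReal.coe_ennreal_le_coe_ennreal_iff.2 (le_iSup I n))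
  · refine EReal.le_of_forall_lt_iff_le.mp fun z hz => ?_
    rcases lt_or_ge 0 z with hz0 | hz0
    · refine le_trans (iInf_le _ 0) (le_trans (ereal_neg_coe_ennreal_le_zero (I 0)) ?_)
      exact_mod_cast hz0.le
    · have h1 : ENNReal.ofReal (-z) < ⨆ n, I n := by
        by_contra hcon
        push_neg at hcon
        have h2 : -((ENNReal.ofReal (-z) : ℝ≥0∞) : EReal) ≤ -(((⨆ n, I n) : ℝ≥0∞) : EReal) :=
          EReal.neg_le_neg_iff.2 (EReal.coe_ennreal_le_coe_ennreal_iff.2 hcon)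
        have h3 : ((ENNReal.ofReal (-z) : ℝ≥0∞) : EReal) = ((-z : ℝ) : EReal) := by
          rw [EReal.coe_ennreal_ofReal, max_eq_left (neg_nonneg.2 hz0)]
        rw [h3, ← EReal.coe_neg, neg_neg] at h2
        exact absurd (lt_of_le_of_lt h2 hz) (lt_irrefl _)
      obtain ⟨n, hn⟩ := lt_iSup_iff.mp h1
      refine le_trans (iInf_le _ n) (le_of_lt ?_)
      rcases eq_or_ne (I n) ⊤ with htop | htop
      · rw [htop, EReal.coe_ennreal_top, EReal.neg_top]
        exact EReal.bot_lt_coe z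
      · have h5 : -z < (I n).toReal :=
          (ENNReal.ofReal_lt_iff_lt_toReal (neg_nonneg.2 hz0) htop).1 hn
        rw [← ereal_coe_ennreal_toReal htop, ← EReal.coe_neg]
        exact_mod_cast (by linarith : -(I n).toReal < z)

lemma aux_sub_sub (c : ℝ) (Ia Ib J : ℝ≥0∞) (hIb : Ib ≠ ⊤) (h : Ia ≤ Ib + J) :
    (0 : EReal) - (J : EReal) ≤ ((c : EReal) - Ia) - ((c : EReal) - Ib) := by
  rcases eq_or_ne J ⊤ with rfl | hJ
  · rw [EReal.coe_ennreal_top, ereal_zero_sub, EReal.neg_top]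
    exact bot_le
  · have hIa : Ia ≠ ⊤ := by
      intro hIa
      rw [hIa] at h
      exact absurd (eq_top_iff.2 h) (by simp [hIb, hJ, ENNReal.add_eq_top])
    have hreal : Ia.toReal ≤ Ib.toReal + J.toReal := by
      rw [← ENNReal.toReal_add hIb hJ]
      exact ENNReal.toReal_le_toReal hIa (by simp [hIb, hJ, ENNReal.add_eq_top]) |>.2 h
    rw [← ereal_coe_ennreal_toReal hIa, ← ereal_coe_ennreal_toReal hIb,
      ← ereal_coe_ennreal_toReal hJ,
      show (0 : EReal) = ((0 : ℝ) : EReal) from rfl,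
      ← EReal.coe_sub, ← EReal.coe_sub, ← EReal.coe_sub, ← EReal.coe_sub]
    exact_mod_cast by linarith

end aux4sec

section expEAux

variable {Ω : Type*} [MeasurableSpace Ω] {P : Measure Ω} {C : ℝ} {g g₁ g₂ u : Ω → EReal}

lemma expE_def (P : Measure Ω) (C : ℝ) (g : Ω → EReal) :
    expE P C g = (C : EReal) - ENNReal.toEReal (∫⁻ ω, erealToENNReal ((C : EReal) - g ω) ∂P) :=
  rfl

lemma expE_mono_ae (h : ∀ᵐ ω ∂P, g₁ ω ≤ g₂ ω) : expE P C g₁ ≤ expE P C g₂ :=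
  EReal.sub_le_sub le_rfl (EReal.coe_ennreal_le_coe_ennreal_iff.2 (lintegral_mono_ae
    (h.mono fun _ hω => eE_mono (EReal.sub_le_sub le_rfl hω))))

lemma expE_congr_ae (h : g₁ =ᵐ[P] g₂) : expE P C g₁ = expE P C g₂ :=
  le_antisymm (expE_mono_ae (h.mono fun _ hω => hω.le))
    (expE_mono_ae (h.mono fun _ hω => hω.ge))

lemma expE_le_const : expE P C g ≤ (C : EReal) := by
  calc expE P C g ≤ (C : EReal) - ((0 : ℝ≥0∞) : EReal) :=
        EReal.sub_le_sub le_rfl (EReal.coe_ennreal_le_coe_ennreal_iff.2 zero_le)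
  _ = (C : EReal) := by rw [EReal.coe_ennreal_zero, ereal_sub_zero]

lemma expE_min_zero : expE P 0 g = expE P 0 (fun ω => min (g ω) 0) := by
  have key : ∀ x : EReal, erealToENNReal (0 - x) = erealToENNReal (0 - min x 0) := by
    intro x
    rcases le_total x 0 with hx | hx
    · rw [min_eq_left hx]
    · rw [min_eq_right hx, ereal_zero_sub, ereal_zero_sub, neg_zero, eE_zero,
        eE_nonpos (by rw [← neg_zero]; exact EReal.neg_le_neg_iff.2 hx)]
  simp only [expE_def, EReal.coe_zero]
  congr 2
  exact lintegral_congr fun ω => key (g ω)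

end expEAux

section expEAux2

variable {Ω : Type*} [MeasurableSpace Ω] {P : Measure Ω}

lemma expE_const_add (P : Measure Ω) (C : ℝ) (u : Ω → EReal) :
    expE P C (fun ω => (C : EReal) + u ω) = (C : EReal) + expE P 0 u := by
  have h1 : ∀ x : EReal, (C : EReal) - ((C : EReal) + x) = (0 : EReal) - x := by
    intro x
    induction x using EReal.rec with
    | bot => rw [EReal.add_bot, EReal.coe_sub_bot, ereal_zero_sub, EReal.neg_bot]
    | top => rw [EReal.coe_add_top, EReal.sub_top, ereal_zero_sub, EReal.neg_top]
    | coe r =>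
      rw [← EReal.coe_add, ← EReal.coe_sub, show (0 : EReal) = ((0 : ℝ) : EReal) from rfl,
        ← EReal.coe_sub]
      exact congrArg Real.toEReal (by ring)
  simp only [expE_def, EReal.coe_zero]
  simp_rw [h1]
  rw [ereal_zero_sub, sub_eq_add_neg]

lemma expE_scale {c : ℝ} (hc : 0 < c) (P : Measure Ω) (u : Ω → EReal) :
    expE P 0 (fun ω => (c : EReal) * u ω) = (c : EReal) * expE P 0 u := by
  simp only [expE_def, EReal.coe_zero]
  simp_rw [ereal_zero_sub, ← mul_neg, eE_mul hc]
  rw [lintegral_const_mul' _ _ ENNReal.ofReal_ne_top, EReal.coe_ennreal_mul,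
    show ((ENNReal.ofReal c : ℝ≥0∞) : EReal) = (c : EReal) by
      rw [EReal.coe_ennreal_ofReal, max_eq_left hc.le],
    mul_neg]

lemma expE_iInf (P : Measure Ω) (u : ℕ → Ω → EReal)
    (hm : ∀ n, Measurable (u n)) (hmono : ∀ ω, Antitone fun n => u n ω) :
    expE P 0 (fun ω => ⨅ n, u n ω) = ⨅ n, expE P 0 (u n) := by
  simp only [expE_def, EReal.coe_zero]
  simp_rw [ereal_zero_sub]
  have h1 : ∀ ω, erealToENNReal (-(⨅ n, u n ω)) = ⨆ n, erealToENNReal (-(u n ω)) := by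
    intro ω
    rw [ereal_neg_iInf]
    exact eE_iSup _
  simp_rw [h1]
  have h2 : (∫⁻ ω, ⨆ n, erealToENNReal (-(u n ω)) ∂P)
      = ⨆ n, ∫⁻ ω, erealToENNReal (-(u n ω)) ∂P :=
    lintegral_iSup (f := fun n ω => erealToENNReal (-(u n ω)))
      (fun n => measurable_eE.comp (measurable_ereal_neg.comp (hm n)))
      (fun m n hmn ω => eE_mono (EReal.neg_le_neg_iff.2 (hmono ω hmn)))
  rw [h2]
  exact aux4 _

end expEAux2


/-- for a nonempty family `(Pᵢ)` of probability measures and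
`Φ(h) := inf_i E^{Pᵢ}[Ψ(h)]`, one has `Φ^∞(h) = inf_i E^{Pᵢ}[Ψ^∞(h)]`
(horizon functions with base point `h°`). -/
theorem stmt6 {Ω : Type*} [MeasurableSpace Ω] {ι : Type*} [Nonempty ι]
    (P : ι → Measure Ω) [∀ i, IsProbabilityMeasure (P i)]
    {d : ℕ} (Ψ : Ω → (Fin d → ℝ) → EReal) (C : ℝ)
    (hmeas : Measurable (Function.uncurry Ψ))
    (hconc : ∀ ω, IsConcaveE (Ψ ω))
    (hbd : ∀ ω z, Ψ ω z ≤ (C : EReal))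
    (h₀ : Fin d → ℝ) (hh₀ : (⨅ i, expE (P i) C (fun ω => Ψ ω h₀)) ≠ ⊥) :
    ∀ h : Fin d → ℝ,
      hor (fun z => ⨅ i, expE (P i) C (fun ω => Ψ ω z)) h₀ h
        = ⨅ i, expE (P i) 0 (fun ω => hor (Ψ ω) h₀ h) := by
  intro h
  classical
  -- basic facts
  have hΨtop : ∀ ω zz, Ψ ω zz ≠ ⊤ := fun ω zz =>
    ((hbd ω zz).trans_lt (EReal.coe_lt_top C)).ne
  have hms : ∀ zz : Fin d → ℝ, Measurable (fun ω => Ψ ω zz) := fun zz =>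
    hmeas.comp (measurable_id.prodMk measurable_const)
  have hnpos : ∀ n : ℕ+, (0:ℝ) < (n : ℝ) := fun n => by exact_mod_cast n.pos
  have hinvpos : ∀ n : ℕ+, (0:ℝ) < ((n : ℝ))⁻¹ := fun n => inv_pos.2 (hnpos n)
  -- notation
  set Z : ℕ+ → (Fin d → ℝ) := fun n => h₀ + (n : ℝ) • h with hZdef
  set q : ℕ+ → Ω → EReal :=
    fun m ω => ((m : ℝ)⁻¹ : EReal) * (Ψ ω (Z m) - Ψ ω h₀) with hqdef
  have hhor_q : ∀ ω, hor (Ψ ω) h₀ h = ⨅ m : ℕ+, q m ω := fun ω => rfl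
  have hcinv : ∀ mm : ℕ+, ((mm : ℝ)⁻¹ : EReal) = (((mm : ℝ)⁻¹ : ℝ) : EReal) := fun mm =>
    (EReal.coe_inv _).symm
  set b : ι → EReal := fun i => expE (P i) C (fun ω => Ψ ω h₀) with hbdef
  -- b i is real
  have hbC : ∀ i, b i ≤ (C : EReal) := fun i => expE_le_const
  have hbbot : ∀ i, b i ≠ ⊥ := by
    intro i hbi
    exact hh₀ (le_bot_iff.1 (hbi ▸ iInf_le b i))
  have hΦ0top : (⨅ i, b i) ≠ ⊤ :=
    (((iInf_le b (Classical.arbitrary ι)).trans (hbC _)).trans_lt (EReal.coe_lt_top C)).ne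
  obtain ⟨r0, hr0⟩ : ∃ r : ℝ, (⨅ i, b i) = (r : EReal) :=
    ⟨(⨅ i, b i).toReal, (EReal.coe_toReal hΦ0top hh₀).symm⟩
  have hr0b : ∀ i, (r0 : EReal) ≤ b i := fun i => hr0 ▸ iInf_le b i
  have hr0C : r0 ≤ C := by
    have := (hr0 ▸ (iInf_le b (Classical.arbitrary ι))).trans (hbC _)
    exact_mod_cast this
  -- a.e. finiteness at h₀
  have hae : ∀ i, ∀ᵐ ω ∂(P i), Ψ ω h₀ ≠ ⊥ := by
    intro i
    have hBmeas : Measurable (fun ω => erealToENNReal ((C : EReal) - Ψ ω h₀)) :=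
      measurable_eE.comp (measurable_ereal_sub.comp (measurable_const.prodMk (hms h₀)))
    have hI : (∫⁻ ω, erealToENNReal ((C : EReal) - Ψ ω h₀) ∂(P i)) ≠ ⊤ := by
      intro hI
      apply hbbot i
      rw [hbdef]
      show expE (P i) C (fun ω => Ψ ω h₀) = ⊥
      rw [expE_def, hI, EReal.coe_ennreal_top, EReal.sub_top]
    filter_upwards [ae_lt_top hBmeas hI] with ω hω hbot
    rw [hbot, EReal.coe_sub_bot, eE_top] at hω
    exact absurd hω (lt_irrefl _)
  -- concavity: monotonicity of difference quotients
  have hkey : ∀ ω (r : ℝ), Ψ ω h₀ = (r : EReal) →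
      ∀ m n : ℕ+, m ≤ n → q n ω ≤ q m ω := by
    intro ω r hr m n hmn
    have hn0 : ((n : ℝ)) ≠ 0 := (hnpos n).ne'
    have hmn' : ((m : ℝ)) ≤ ((n : ℝ)) := by exact_mod_cast hmn
    set am : ℝ := (m : ℝ) / (n : ℝ) with ham
    have ham1 : (0:ℝ) ≤ am := div_nonneg (hnpos m).le (hnpos n).le
    have ham2 : (0:ℝ) ≤ 1 - am := by
      rw [sub_nonneg, ham, div_le_one (hnpos n)]
      exact hmn'
    have hcomb : am • (Z n) + (1 - am) • h₀ = Z m := by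
      rw [hZdef]
      show am • (h₀ + (n : ℝ) • h) + (1 - am) • h₀ = h₀ + (m : ℝ) • h
      funext j
      show am * (h₀ j + (n : ℝ) * h j) + (1 - am) * h₀ j = h₀ j + (m : ℝ) * h j
      rw [ham]
      field_simp
      try ring
    have hconc' := hconc ω (Z n) h₀ am (1 - am) ham1 ham2 (by ring)
    rw [hcomb] at hconc'
    rcases eq_or_ne (Ψ ω (Z n)) ⊥ with hX | hX
    · rw [hqdef]
      show ((n : ℝ)⁻¹ : EReal) * (Ψ ω (Z n) - Ψ ω h₀) ≤ _
      rw [hX, EReal.bot_sub, hcinv n, EReal.coe_mul_bot_of_pos (hinvpos n)]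
      exact bot_le
    · obtain ⟨x, hx⟩ : ∃ x : ℝ, Ψ ω (Z n) = (x : EReal) :=
        ⟨_, (EReal.coe_toReal (hΨtop ω _) hX).symm⟩
      rw [hx, hr, ← EReal.coe_mul, ← EReal.coe_mul, ← EReal.coe_add] at hconc'
      obtain ⟨y, hy⟩ : ∃ y : ℝ, Ψ ω (Z m) = (y : EReal) := by
        refine ⟨_, (EReal.coe_toReal (hΨtop ω _) ?_).symm⟩
        intro hbotm
        rw [hbotm] at hconc'
        exact (EReal.coe_ne_bot _ (le_bot_iff.1 hconc')).elim
      rw [hy] at hconc'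
      have hyr : am * x + (1 - am) * r ≤ y := by exact_mod_cast hconc'
      rw [hqdef]
      show ((n : ℝ)⁻¹ : EReal) * (Ψ ω (Z n) - Ψ ω h₀)
        ≤ ((m : ℝ)⁻¹ : EReal) * (Ψ ω (Z m) - Ψ ω h₀)
      rw [hx, hy, hr, hcinv n, hcinv m, ← EReal.coe_sub, ← EReal.coe_sub,
        ← EReal.coe_mul, ← EReal.coe_mul]
      have : (n:ℝ)⁻¹ * (x - r) ≤ (m:ℝ)⁻¹ * (y - r) := by
        rw [inv_mul_eq_div, inv_mul_eq_div, div_le_div_iff₀ (hnpos n) (hnpos m)]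
        have hyn : (am * x + (1 - am) * r) * (n:ℝ) ≤ y * (n:ℝ) :=
          mul_le_mul_of_nonneg_right hyr (hnpos n).le
        have hexp : (am * x + (1 - am) * r) * (n:ℝ) = (m:ℝ) * x + ((n:ℝ) - (m:ℝ)) * r := by
          rw [ham]; field_simp; try ring
        rw [hexp] at hyn
        nlinarith [hnpos m, hnpos n]
      exact_mod_cast this
  -- values of q
  have hquval : ∀ (mm : ℕ+) ω (r : ℝ), Ψ ω h₀ = (r : EReal) → ∀ x : ℝ,
      Ψ ω (Z mm) = (x : EReal) →
      q mm ω = (((mm : ℝ)⁻¹ * (x - r) : ℝ) : EReal) := by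
    intro mm ω r hr x hx
    rw [hqdef]
    show ((mm : ℝ)⁻¹ : EReal) * (Ψ ω (Z mm) - Ψ ω h₀) = _
    rw [hx, hr, hcinv mm, ← EReal.coe_sub, ← EReal.coe_mul]
  have hqbot : ∀ (mm : ℕ+) ω (r : ℝ), Ψ ω h₀ = (r : EReal) → Ψ ω (Z mm) = ⊥ →
      q mm ω = ⊥ := by
    intro mm ω r hr hx
    rw [hqdef]
    show ((mm : ℝ)⁻¹ : EReal) * (Ψ ω (Z mm) - Ψ ω h₀) = ⊥
    rw [hx, EReal.bot_sub, hcinv mm, EReal.coe_mul_bot_of_pos (hinvpos mm)]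
  -- hor(Ψ ω) ≤ 0 where Ψ ω h₀ is real
  have hqleC : ∀ (mm : ℕ+) ω (r : ℝ), Ψ ω h₀ = (r : EReal) →
      q mm ω ≤ ((((mm : ℝ))⁻¹ * (C - r) : ℝ) : EReal) := by
    intro mm ω r hr
    rcases eq_or_ne (Ψ ω (Z mm)) ⊥ with hX | hX
    · rw [hqbot mm ω r hr hX]
      exact bot_le
    · obtain ⟨x, hx⟩ : ∃ x : ℝ, Ψ ω (Z mm) = (x : EReal) :=
        ⟨_, (EReal.coe_toReal (hΨtop ω _) hX).symm⟩
      rw [hquval mm ω r hr x hx]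
      have hxC : x ≤ C := by
        have := hbd ω (Z mm)
        rw [hx] at this
        exact_mod_cast this
      have : ((mm : ℝ))⁻¹ * (x - r) ≤ ((mm : ℝ))⁻¹ * (C - r) :=
        mul_le_mul_of_nonneg_left (by linarith) (hinvpos mm).le
      exact_mod_cast this
  have hhor0 : ∀ ω (r : ℝ), Ψ ω h₀ = (r : EReal) → hor (Ψ ω) h₀ h ≤ 0 := by
    intro ω r hr
    have hrC : r ≤ C := by
      have := hbd ω h₀
      rw [hr] at this
      exact_mod_cast this
    have h0 : hor (Ψ ω) h₀ h ≤ ((0:ℝ) : EReal) := by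
      apply aux_eps
      intro ε hε
      obtain ⟨N, hN⟩ := exists_nat_gt ((C - r) / ε)
      set mm : ℕ+ := N.succPNat with hmm
      have hmmR : (N:ℝ) + 1 ≤ (mm : ℝ) := by
        rw [hmm]
        norm_cast
      have hd : ((mm : ℝ))⁻¹ * (C - r) ≤ ε := by
        rw [inv_mul_eq_div, div_le_iff₀ (hnpos mm)]
        have h1 : (C - r) / ε < (N:ℝ) + 1 := hN.trans (by linarith)
        have h2 : (C - r) < ((N:ℝ) + 1) * ε := by
          rw [div_lt_iff₀ hε] at h1
          linarith
        have h3 : ((N:ℝ) + 1) * ε ≤ (mm:ℝ) * ε := by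
          apply mul_le_mul_of_nonneg_right hmmR hε.le
        calc C - r ≤ ((N:ℝ)+1) * ε := h2.le
        _ ≤ (mm:ℝ) * ε := h3
        _ = ε * (mm:ℝ) := by ring
      calc hor (Ψ ω) h₀ h ≤ q mm ω := (hhor_q ω) ▸ iInf_le _ mm
      _ ≤ ((((mm : ℝ))⁻¹ * (C - r) : ℝ) : EReal) := hqleC mm ω r hr
      _ ≤ ((ε : ℝ) : EReal) := by exact_mod_cast hd
      _ = (((0:ℝ) + ε : ℝ) : EReal) := by norm_num
    simpa using h0
  -- modified sequence for monotone convergence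
  set u' : ℕ+ → Ω → EReal :=
    fun m ω => if Ψ ω h₀ = ⊥ then 0 else min (q m ω) 0 with hu'def
  have hu'meas : ∀ m, Measurable (u' m) := by
    intro m
    have hq_meas : Measurable (q m) := by
      rw [hqdef]
      exact (measurable_const_mul_ereal _).comp
        (measurable_ereal_sub.comp ((hms (Z m)).prodMk (hms h₀)))
    refine Measurable.ite ?_ measurable_const (hq_meas.min measurable_const)
    exact (hms h₀) (measurableSet_singleton ⊥)
  have hu'mono : ∀ ω, ∀ m n : ℕ+, m ≤ n → u' n ω ≤ u' m ω := by
    intro ω m n hmn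
    rw [hu'def]
    by_cases hb2 : Ψ ω h₀ = ⊥
    · simp only [if_pos hb2]
      exact le_rfl
    · simp only [if_neg hb2]
      have hr : Ψ ω h₀ = ((Ψ ω h₀).toReal : EReal) :=
        (EReal.coe_toReal (hΨtop ω h₀) hb2).symm
      exact min_le_min (hkey ω _ hr m n hmn) le_rfl
  have hsurj : Function.Surjective (fun k : ℕ => k.succPNat) := by
    intro m
    exact ⟨m.natPred, m.succPNat_natPred⟩
  -- identification of the RHS integrals
  have hRi : ∀ i, expE (P i) 0 (fun ω => hor (Ψ ω) h₀ h)
      = ⨅ m : ℕ+, expE (P i) 0 (fun ω => min (q m ω) 0) := by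
    intro i
    rw [expE_min_zero]
    have e1 : (fun ω => min (hor (Ψ ω) h₀ h) 0)
        =ᵐ[P i] (fun ω => ⨅ k : ℕ, u' k.succPNat ω) := by
      filter_upwards [hae i] with ω hωb
      have hval : ∀ k : ℕ, u' k.succPNat ω = min (q k.succPNat ω) 0 := fun k => if_neg hωb
      rw [iInf_congr hval, hsurj.iInf_comp (fun m => min (q m ω) 0), iInf_min_const,
        ← hhor_q ω]
    rw [expE_congr_ae e1]
    rw [expE_iInf (P i) (fun k => u' k.succPNat) (fun k => hu'meas _)
      (fun ω k l hkl => hu'mono ω _ _ (by exact_mod_cast Nat.succ_le_succ hkl))]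
    refine Eq.trans (hsurj.iInf_comp (fun m => expE (P i) 0 (u' m))) ?_
    refine iInf_congr fun k => ?_
    refine expE_congr_ae ?_
    filter_upwards [hae i] with ω hωb
    exact if_neg hωb
  -- coe min helper
  have hcoemin : ∀ t : ℝ, min ((t:ℝ) : EReal) 0 = ((min t 0 : ℝ) : EReal) := by
    intro t
    rcases le_total t 0 with ht | ht
    · rw [min_eq_left (by exact_mod_cast ht), min_eq_left ht]
    · rw [min_eq_right (by exact_mod_cast ht), min_eq_right ht]
      exact EReal.coe_zero.symm
  have hqmeas : ∀ m : ℕ+, Measurable (q m) := by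
    intro m
    rw [hqdef]
    exact (measurable_const_mul_ereal _).comp
      (measurable_ereal_sub.comp ((hms (Z m)).prodMk (hms h₀)))
  -- the ≥ direction core estimate
  have hge : ∀ (i : ι) (n : ℕ+),
      expE (P i) 0 (fun ω => min (q n ω) 0)
        ≤ ((n : ℝ)⁻¹ : EReal) * (expE (P i) C (fun ω => Ψ ω (Z n)) - (r0 : EReal)) := by
    intro i n
    set vn : Ω → EReal := fun ω => ((n : ℝ) : EReal) * min (q n ω) 0 with hvndef
    have hvn0 : ∀ ω, vn ω ≤ 0 := by
      intro ω
      rw [hvndef]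
      calc ((n : ℝ) : EReal) * min (q n ω) 0 ≤ ((n : ℝ) : EReal) * 0 :=
        mul_le_mul_of_nonneg_left (min_le_right _ _) (by exact_mod_cast (hnpos n).le)
      _ = 0 := mul_zero _
    set Ia := ∫⁻ ω, erealToENNReal ((C : EReal) - Ψ ω (Z n)) ∂(P i) with hIa
    set Ib := ∫⁻ ω, erealToENNReal ((C : EReal) - Ψ ω h₀) ∂(P i) with hIb
    set J := ∫⁻ ω, erealToENNReal ((0 : EReal) - vn ω) ∂(P i) with hJ
    have hIbtop : Ib ≠ ⊤ := by
      intro hI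
      apply hbbot i
      show expE (P i) C (fun ω => Ψ ω h₀) = ⊥
      rw [expE_def, ← hIb, hI, EReal.coe_ennreal_top, EReal.sub_top]
    have hBmeas : Measurable (fun ω => erealToENNReal ((C : EReal) - Ψ ω h₀)) :=
      measurable_eE.comp (measurable_ereal_sub.comp (measurable_const.prodMk (hms h₀)))
    have hptw : ∀ᵐ ω ∂(P i), erealToENNReal ((C : EReal) - Ψ ω (Z n))
        ≤ erealToENNReal ((C : EReal) - Ψ ω h₀) + erealToENNReal ((0 : EReal) - vn ω) := by
      filter_upwards [hae i] with ω hωb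
      have hr : Ψ ω h₀ = (((Ψ ω h₀).toReal : ℝ) : EReal) :=
        (EReal.coe_toReal (hΨtop ω h₀) hωb).symm
      set r : ℝ := (Ψ ω h₀).toReal
      have hrC : r ≤ C := by
        have := hbd ω h₀
        rw [hr] at this
        exact_mod_cast this
      have hCr0 : (0 : EReal) ≤ ((C - r : ℝ) : EReal) := by
        exact_mod_cast sub_nonneg.2 hrC
      have hnv0 : (0 : EReal) ≤ (0 : EReal) - vn ω := by
        rw [ereal_zero_sub, ← neg_zero]
        exact EReal.neg_le_neg_iff.2 (hvn0 ω)
      have hmain : (C : EReal) - Ψ ω (Z n) ≤ ((C - r : ℝ) : EReal) + ((0 : EReal) - vn ω) := by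
        rcases eq_or_ne (Ψ ω (Z n)) ⊥ with hX | hX
        · have hvbot : vn ω = ⊥ := by
            rw [hvndef]
            show ((n : ℝ) : EReal) * min (q n ω) 0 = ⊥
            rw [hqbot n ω r hr hX, min_eq_left bot_le, EReal.coe_mul_bot_of_pos (hnpos n)]
          rw [hX, EReal.coe_sub_bot, hvbot, ereal_zero_sub, EReal.neg_bot, EReal.coe_add_top]
        · obtain ⟨x, hx⟩ : ∃ x : ℝ, Ψ ω (Z n) = (x : EReal) :=
            ⟨_, (EReal.coe_toReal (hΨtop ω _) hX).symm⟩
          have hvval : vn ω = (((n:ℝ) * min ((n:ℝ)⁻¹ * (x - r)) 0 : ℝ) : EReal) := by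
            rw [hvndef]
            show ((n : ℝ) : EReal) * min (q n ω) 0 = _
            rw [hquval n ω r hr x hx, hcoemin, ← EReal.coe_mul]
          rw [hx, hvval, ← EReal.coe_sub, show (0:EReal) = ((0:ℝ) : EReal) from rfl,
            ← EReal.coe_sub, ← EReal.coe_add]
          have h1 : (n:ℝ) * min ((n:ℝ)⁻¹ * (x - r)) 0 ≤ (n:ℝ) * ((n:ℝ)⁻¹ * (x - r)) :=
            mul_le_mul_of_nonneg_left (min_le_left _ _) (hnpos n).le
          have h2 : (n:ℝ) * ((n:ℝ)⁻¹ * (x - r)) = x - r := by field_simp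
          rw [h2] at h1
          exact_mod_cast (by linarith : C - x ≤ (C - r) + (0 - (n:ℝ) * min ((n:ℝ)⁻¹ * (x - r)) 0))
      calc erealToENNReal ((C : EReal) - Ψ ω (Z n))
          ≤ erealToENNReal (((C - r : ℝ) : EReal) + ((0 : EReal) - vn ω)) := eE_mono hmain
        _ = erealToENNReal (((C - r : ℝ) : EReal)) + erealToENNReal ((0 : EReal) - vn ω) :=
            eE_add hCr0 hnv0
        _ = erealToENNReal ((C : EReal) - Ψ ω h₀) + erealToENNReal ((0 : EReal) - vn ω) := by
            rw [hr, ← EReal.coe_sub]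
    have hIaJ : Ia ≤ Ib + J := by
      rw [hIa, hIb, hJ]
      calc (∫⁻ ω, erealToENNReal ((C : EReal) - Ψ ω (Z n)) ∂(P i))
          ≤ ∫⁻ ω, (erealToENNReal ((C : EReal) - Ψ ω h₀)
              + erealToENNReal ((0 : EReal) - vn ω)) ∂(P i) := lintegral_mono_ae hptw
        _ = _ := lintegral_add_left hBmeas _
    have hsub : (0 : EReal) - (J : EReal)
        ≤ ((C : EReal) - (Ia : EReal)) - ((C : EReal) - (Ib : EReal)) :=
      aux_sub_sub C Ia Ib J hIbtop hIaJ
    have hvnE : expE (P i) 0 vn = (0 : EReal) - (J : EReal) := by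
      rw [expE_def]
      simp only [EReal.coe_zero]
      rfl
    have hscale : expE (P i) 0 vn
        = ((n : ℝ) : EReal) * expE (P i) 0 (fun ω => min (q n ω) 0) := by
      rw [hvndef]
      exact expE_scale (hnpos n) (P i) _
    have hQn : ((n : ℝ) : EReal) * expE (P i) 0 (fun ω => min (q n ω) 0)
        ≤ expE (P i) C (fun ω => Ψ ω (Z n)) - b i := by
      rw [← hscale, hvnE]
      have ha : expE (P i) C (fun ω => Ψ ω (Z n)) = (C : EReal) - (Ia : EReal) := by
        rw [expE_def, ← hIa]
      have hb2 : b i = (C : EReal) - (Ib : EReal) := by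
        rw [hbdef]
        show expE (P i) C (fun ω => Ψ ω h₀) = _
        rw [expE_def, ← hIb]
      rw [ha, hb2]
      exact hsub
    have hinvnn : (0 : EReal) ≤ (((n:ℝ)⁻¹ : ℝ) : EReal) := by
      exact_mod_cast (hinvpos n).le
    have hcancel : (((n:ℝ)⁻¹ : ℝ) : EReal)
        * (((n : ℝ) : EReal) * expE (P i) 0 (fun ω => min (q n ω) 0))
        = expE (P i) 0 (fun ω => min (q n ω) 0) := by
      rw [coe_mul_coe_mul, inv_mul_cancel₀ (hnpos n).ne', EReal.coe_one, one_mul]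
    rw [hcinv n]
    calc expE (P i) 0 (fun ω => min (q n ω) 0)
        ≤ (((n:ℝ)⁻¹ : ℝ) : EReal) * (expE (P i) C (fun ω => Ψ ω (Z n)) - b i) := by
          rw [← hcancel]
          exact mul_le_mul_of_nonneg_left hQn hinvnn
      _ ≤ (((n:ℝ)⁻¹ : ℝ) : EReal) * (expE (P i) C (fun ω => Ψ ω (Z n)) - (r0 : EReal)) :=
          mul_le_mul_of_nonneg_left (EReal.sub_le_sub le_rfl (hr0b i)) hinvnn
  -- the ≤ direction core estimate
  have hle : ∀ (i : ι) (m : ℕ+),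
      (⨅ n : ℕ+, ((n : ℝ)⁻¹ : EReal) * (expE (P i) C (fun ω => Ψ ω (Z n)) - (r0 : EReal)))
        ≤ expE (P i) 0 (fun ω => min (q m ω) 0) := by
    intro i m
    set Qm := expE (P i) 0 (fun ω => min (q m ω) 0) with hQmdef
    have hQle0 : Qm ≤ 0 := by
      rw [hQmdef]
      simpa using (expE_le_const (P := P i) (C := 0) (g := fun ω => min (q m ω) 0))
    have hQtop : Qm ≠ ⊤ := (lt_of_le_of_lt hQle0 EReal.zero_lt_top).ne
    have hak : ∀ k : ℕ+, m ≤ k →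
        expE (P i) C (fun ω => Ψ ω (Z k)) ≤ (C : EReal) + ((k : ℝ) : EReal) * Qm := by
      intro k hmk
      have hptw : ∀ᵐ ω ∂(P i),
          Ψ ω (Z k) ≤ (C : EReal) + ((k : ℝ) : EReal) * min (q m ω) 0 := by
        filter_upwards [hae i] with ω hωb
        have hr : Ψ ω h₀ = (((Ψ ω h₀).toReal : ℝ) : EReal) :=
          (EReal.coe_toReal (hΨtop ω h₀) hωb).symm
        set r : ℝ := (Ψ ω h₀).toReal
        have hrC : r ≤ C := by
          have := hbd ω h₀
          rw [hr] at this
          exact_mod_cast this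
        rcases eq_or_ne (Ψ ω (Z k)) ⊥ with hX | hX
        · rw [hX]
          exact bot_le
        · obtain ⟨x, hx⟩ : ∃ x : ℝ, Ψ ω (Z k) = (x : EReal) :=
            ⟨_, (EReal.coe_toReal (hΨtop ω _) hX).symm⟩
          have hqk : q k ω = ((((k:ℝ))⁻¹ * (x - r) : ℝ) : EReal) := hquval k ω r hr x hx
          have hqmk : q k ω ≤ q m ω := hkey ω r hr m k hmk
          have hqm_ne_bot : q m ω ≠ ⊥ := by
            intro hbm
            rw [hbm, hqk] at hqmk
            exact EReal.coe_ne_bot _ (le_bot_iff.1 hqmk)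
          have hqm_ne_top : q m ω ≠ ⊤ := by
            rcases eq_or_ne (Ψ ω (Z m)) ⊥ with hb' | hb'
            · rw [hqbot m ω r hr hb']
              simp
            · obtain ⟨y, hy⟩ : ∃ y : ℝ, Ψ ω (Z m) = (y : EReal) :=
                ⟨_, (EReal.coe_toReal (hΨtop ω _) hb').symm⟩
              rw [hquval m ω r hr y hy]
              exact EReal.coe_ne_top _
          obtain ⟨s, hs⟩ : ∃ s : ℝ, q m ω = (s : EReal) :=
            ⟨_, (EReal.coe_toReal hqm_ne_top hqm_ne_bot).symm⟩
          have hsk : ((k:ℝ))⁻¹ * (x - r) ≤ s := by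
            rw [hqk, hs] at hqmk
            exact_mod_cast hqmk
          have hxC : x ≤ C := by
            have := hbd ω (Z k)
            rw [hx] at this
            exact_mod_cast this
          rw [hx, hs, hcoemin s, ← EReal.coe_mul, ← EReal.coe_add]
          have h1 : min (((k:ℝ))⁻¹ * (x - r)) 0 ≤ min s 0 := min_le_min hsk le_rfl
          have h2 : (k:ℝ) * min (((k:ℝ))⁻¹ * (x - r)) 0 ≤ (k:ℝ) * min s 0 :=
            mul_le_mul_of_nonneg_left h1 (hnpos k).le
          have h3 : ((k:ℝ))⁻¹ * (x - r) - ((k:ℝ))⁻¹ * (C - r)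
              ≤ min (((k:ℝ))⁻¹ * (x - r)) 0 := by
            rcases le_total (((k:ℝ))⁻¹ * (x - r)) 0 with hc | hc
            · rw [min_eq_left hc]
              have : (0:ℝ) ≤ ((k:ℝ))⁻¹ * (C - r) :=
                mul_nonneg (hinvpos k).le (by linarith)
              linarith
            · rw [min_eq_right hc]
              have : ((k:ℝ))⁻¹ * (x - r) ≤ ((k:ℝ))⁻¹ * (C - r) :=
                mul_le_mul_of_nonneg_left (by linarith) (hinvpos k).le
              linarith
          have h4 : (k:ℝ) * (((k:ℝ))⁻¹ * (x - r) - ((k:ℝ))⁻¹ * (C - r)) = x - C := by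
            field_simp
            try ring
          have h5 : x - C ≤ (k:ℝ) * min (((k:ℝ))⁻¹ * (x - r)) 0 := by
            calc x - C = (k:ℝ) * (((k:ℝ))⁻¹ * (x - r) - ((k:ℝ))⁻¹ * (C - r)) := h4.symm
            _ ≤ (k:ℝ) * min (((k:ℝ))⁻¹ * (x - r)) 0 :=
                mul_le_mul_of_nonneg_left h3 (hnpos k).le
          exact_mod_cast (by linarith : x ≤ C + (k:ℝ) * min s 0)
      calc expE (P i) C (fun ω => Ψ ω (Z k))
          ≤ expE (P i) C (fun ω => (C : EReal) + ((k : ℝ) : EReal) * min (q m ω) 0) :=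
            expE_mono_ae hptw
        _ = (C : EReal) + expE (P i) 0 (fun ω => ((k : ℝ) : EReal) * min (q m ω) 0) :=
            expE_const_add _ _ _
        _ = (C : EReal) + ((k : ℝ) : EReal) * Qm := by
            rw [expE_scale (hnpos k), ← hQmdef]
    rcases eq_or_ne Qm ⊥ with hQbot | hQbot
    · have h1 : expE (P i) C (fun ω => Ψ ω (Z m)) ≤ (C : EReal) + ((m : ℝ) : EReal) * Qm :=
        hak m le_rfl
      rw [hQbot, EReal.coe_mul_bot_of_pos (hnpos m), EReal.add_bot] at h1
      refine le_trans (iInf_le _ m) ?_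
      rw [le_bot_iff.1 h1, EReal.bot_sub, hcinv m, EReal.coe_mul_bot_of_pos (hinvpos m)]
      exact bot_le
    · obtain ⟨sQ, hsQ⟩ : ∃ s : ℝ, Qm = (s : EReal) :=
        ⟨_, (EReal.coe_toReal hQtop hQbot).symm⟩
      rw [hsQ]
      apply aux_eps
      intro ε hε
      obtain ⟨N, hN⟩ := exists_nat_gt ((C - r0) / ε)
      set k : ℕ+ := m + N.succPNat with hk
      have hmk : m ≤ k := by
        rw [hk, ← PNat.coe_le_coe, PNat.add_coe]
        exact Nat.le_add_right _ _
      have hkN : N + 1 ≤ (k : ℕ) := by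
        rw [hk]
        rw [PNat.add_coe, Nat.succPNat_coe]; omega
      have hkR : (N:ℝ) + 1 ≤ (k : ℝ) := by exact_mod_cast hkN
      have hdk : ((k:ℝ))⁻¹ * (C - r0) ≤ ε := by
        rw [inv_mul_eq_div, div_le_iff₀ (hnpos k)]
        have h2 : (C - r0) < ((N:ℝ) + 1) * ε := by
          rw [div_lt_iff₀ hε] at hN
          nlinarith [hε]
        have h3 : ((N:ℝ) + 1) * ε ≤ (k:ℝ) * ε := mul_le_mul_of_nonneg_right hkR hε.le
        calc C - r0 ≤ ((N:ℝ)+1) * ε := h2.le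
        _ ≤ (k:ℝ) * ε := h3
        _ = ε * (k:ℝ) := by ring
      have hinvnnk : (0 : EReal) ≤ (((k:ℝ)⁻¹ : ℝ) : EReal) := by
        exact_mod_cast (hinvpos k).le
      have hakk := hak k hmk
      rw [hsQ, ← EReal.coe_mul, ← EReal.coe_add] at hakk
      calc (⨅ n : ℕ+, ((n : ℝ)⁻¹ : EReal) * (expE (P i) C (fun ω => Ψ ω (Z n)) - (r0 : EReal)))
          ≤ ((k : ℝ)⁻¹ : EReal) * (expE (P i) C (fun ω => Ψ ω (Z k)) - (r0 : EReal)) :=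
            iInf_le _ k
        _ ≤ ((k : ℝ)⁻¹ : EReal) * (((C + (k:ℝ) * sQ : ℝ) : EReal) - (r0 : EReal)) := by
            rw [hcinv k]
            exact mul_le_mul_of_nonneg_left (EReal.sub_le_sub hakk le_rfl) hinvnnk
        _ = ((((k:ℝ))⁻¹ * ((C + (k:ℝ) * sQ) - r0) : ℝ) : EReal) := by
            rw [hcinv k, ← EReal.coe_sub, ← EReal.coe_mul]
        _ ≤ ((sQ + ε : ℝ) : EReal) := by
            apply EReal.coe_le_coe_iff.2
            have heq : ((k:ℝ))⁻¹ * ((C + (k:ℝ) * sQ) - r0) = sQ + ((k:ℝ))⁻¹ * (C - r0) := by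
              field_simp
              try ring
            rw [heq]
            linarith [hdk]
  -- final assembly
  have hhor_eq : hor (fun z => ⨅ i, expE (P i) C (fun ω => Ψ ω z)) h₀ h
      = ⨅ n : ℕ+, ((n : ℝ)⁻¹ : EReal)
          * ((⨅ i, expE (P i) C (fun ω => Ψ ω (Z n))) - (⨅ i, b i)) := rfl
  rw [hhor_eq]
  have hmain : ∀ n : ℕ+,
      ((n : ℝ)⁻¹ : EReal) * ((⨅ i, expE (P i) C (fun ω => Ψ ω (Z n))) - (⨅ i, b i))
        = ⨅ i, ((n : ℝ)⁻¹ : EReal) * (expE (P i) C (fun ω => Ψ ω (Z n)) - (r0 : EReal)) := by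
    intro n
    rw [hr0, iInf_sub_const (fun i => expE (P i) C (fun ω => Ψ ω (Z n))) r0, hcinv n,
      const_mul_iInf (hinvpos n) _]
  rw [iInf_congr hmain]
  apply le_antisymm
  · refine le_iInf fun i => ?_
    rw [hRi i]
    refine le_iInf fun m => ?_
    refine le_trans ?_ (hle i m)
    exact le_iInf fun n => iInf_le_of_le n (iInf_le _ i)
  · refine le_iInf fun n => le_iInf fun i => ?_
    calc (⨅ j, expE (P j) 0 (fun ω => hor (Ψ ω) h₀ h))
        ≤ expE (P i) 0 (fun ω => hor (Ψ ω) h₀ h) := iInf_le _ i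
      _ = ⨅ m : ℕ+, expE (P i) 0 (fun ω => min (q m ω) 0) := hRi i
      _ ≤ expE (P i) 0 (fun ω => min (q n ω) 0) := iInf_le _ n
      _ ≤ ((n : ℝ)⁻¹ : EReal) * (expE (P i) C (fun ω => Ψ ω (Z n)) - (r0 : EReal)) := hge i n
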